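/- If no two colluding agents are adjacent in G (d(x,y) ≥ 2 for all distinct x,y ∈ C), then the broadcast β(x,t) = ρ*(x,t) for all x ∈ C is admissible. -/

import Mathlib

open SimpleGraph

namespace Intercept

variable {V : Type*}

/-- The perceived-distance vectors after `s` rounds of the synchronization protocol.
Colluding agents (members of `C`) always broadcast `β`; honest agents start with
`0`/`∞` and update by the distance-vector rule. -/
noncomputable def perceived [Fintype V] [DecidableEq V] (G : SimpleGraph V)
    (C : Finset V) (β : V → V → ℕ∞) : ℕ → V → V → ℕ∞
  | 0 => fun i j => if i ∈ C then β i j else if i = j then 0 else ⊤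
  | s + 1 => fun i j =>
      if i ∈ C then β i j
      else min (perceived G C β s i j)
        (1 + ⨅ k ∈ G.neighborSet i, perceived G C β s k j)

/-- The stationary perceived distances `ρ = ρ^n`. -/
noncomputable def rho [Fintype V] [DecidableEq V] (G : SimpleGraph V)
    (C : Finset V) (β : V → V → ℕ∞) : V → V → ℕ∞ :=
  perceived G C β (Fintype.card V)

/-- `k ∈ b(i,t)`:  `k` is a neighbor of `i` minimizing the (stationary) perceived
distance `ρ(·,t)` among all neighbors of `i`; only defined (satisfiable) for `i ≠ t`. -/
def inForwardSet (G : SimpleGraph V) (ρ : V → V → ℕ∞) (i t k : V) : Prop :=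
  i ≠ t ∧ G.Adj i k ∧ ∀ k', G.Adj i k' → ρ k t ≤ ρ k' t

/-- A corresponding path from `s` to `t`: a walk in `G` such that every honest vertex
forwards to a member of its forwarding set `b(·,t)`. -/
def IsCorrPath [Fintype V] [DecidableEq V] (G : SimpleGraph V) (C : Finset V)
    (β : V → V → ℕ∞) (s t : V) (ℓ : ℕ) (v : ℕ → V) : Prop :=
  v 0 = s ∧ v ℓ = t ∧ (∀ i < ℓ, G.Adj (v i) (v (i + 1))) ∧
    ∀ i < ℓ, v i ∉ C → inForwardSet G (rho G C β) (v i) t (v (i + 1))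

/-- A broadcast is admissible if between every ordered pair of distinct vertices
there is a corresponding path. -/
def Admissible [Fintype V] [DecidableEq V] (G : SimpleGraph V) (C : Finset V)
    (β : V → V → ℕ∞) : Prop :=
  ∀ s t : V, s ≠ t → ∃ ℓ v, IsCorrPath G C β s t ℓ v

/-- The pair `(s,t)` is captured if every corresponding path from `s` to `t`
contains a colluding vertex. -/
def Captured [Fintype V] [DecidableEq V] (G : SimpleGraph V) (C : Finset V)
    (β : V → V → ℕ∞) (s t : V) : Prop :=
  ∀ ℓ v, IsCorrPath G C β s t ℓ v → ∃ i ≤ ℓ, v i ∈ C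

/-- `N(C,β)`: the number of captured ordered pairs of distinct vertices. -/
noncomputable def numCaptured [Fintype V] [DecidableEq V] (G : SimpleGraph V)
    (C : Finset V) (β : V → V → ℕ∞) : ℕ :=
  Set.ncard {p : V × V | p.1 ≠ p.2 ∧ Captured G C β p.1 p.2}

/-- The `j`-th colluding distance `d_j(x,y)`: the least total length of a sequence of
`j` distinct colluding vertices starting at `x` and ending at `y`, measured by summing
the graph distances of consecutive members (`⊤` if no such sequence exists). -/
noncomputable def collDist (G : SimpleGraph V) (C : Finset V) (j : ℕ) (x y : V) : ℕ∞ :=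
  ⨅ (σ : ℕ → V) (_ : σ 0 = x ∧ σ (j - 1) = y ∧ (∀ i < j, σ i ∈ C) ∧
      ∀ a < j, ∀ b < j, σ a = σ b → a = b),
    ∑ i ∈ Finset.range (j - 1), (G.dist (σ i) (σ (i + 1)) : ℕ∞)

/-- `ρ'(x,t) = max (d(x,t) - 2) 1`. -/
noncomputable def rhoPrime (G : SimpleGraph V) (x t : V) : ℕ∞ :=
  max ((G.dist x t : ℕ∞) - 2) 1

/-- `ρ''(x,t)`: the minimum over colluders `y` and `1 ≤ j ≤ |C|` of
`d_j(x,y) - 2(j-1) + ρ'(y,t)`. -/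
noncomputable def rhoPrime2 (G : SimpleGraph V) (C : Finset V) (x t : V) : ℕ∞ :=
  ⨅ y ∈ C, ⨅ j ∈ Finset.Icc 1 C.card,
    (collDist G C j x y - ((2 * (j - 1) : ℕ) : ℕ∞) + rhoPrime G y t)

/-- The optimal separated broadcast `ρ*(x,t) = min (ρ'(x,t)) (ρ''(x,t))`,
with `ρ*(x,x) = 0`. -/
noncomputable def rhoStar [DecidableEq V] (G : SimpleGraph V) (C : Finset V)
    (x t : V) : ℕ∞ :=
  if x = t then 0 else min (rhoPrime G x t) (rhoPrime2 G C x t)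

/-- A colluder `x` is proper for target `t` if `ρ*(x,t) < ρ'(x,t)`. -/
def Proper [DecidableEq V] (G : SimpleGraph V) (C : Finset V) (x t : V) : Prop :=
  rhoStar G C x t < rhoPrime G x t

open scoped Classical in
/-- The forwarding number of `x` for `t`: the least `j ≥ 1` such that
`ρ*(x,t) = d_j(x,y) - 2(j-1) + ρ'(y,t)` for some colluder `y`, improper
vertices being assigned forwarding number `1`. -/
noncomputable def fwdNum [DecidableEq V] (G : SimpleGraph V) (C : Finset V)
    (x t : V) : ℕ :=
  if Proper G C x t then
    sInf {j : ℕ | 1 ≤ j ∧ ∃ y ∈ C, rhoStar G C x t =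
      collDist G C j x y - ((2 * (j - 1) : ℕ) : ℕ∞) + rhoPrime G y t}
  else 1


section AuxiliaryLemmas
open Finset
set_option linter.unusedSectionVars false
set_option maxHeartbeats 1000000

variable [Fintype V] [DecidableEq V] (G : SimpleGraph V) (C : Finset V) (β : V → V → ℕ∞)

lemma perceived_zero (i j : V) : perceived G C β 0 i j
    = if i ∈ C then β i j else if i = j then 0 else ⊤ := rfl

lemma perceived_succ (s : ℕ) (i j : V) : perceived G C β (s+1) i j
    = if i ∈ C then β i j
      else min (perceived G C β s i j)
        (1 + ⨅ k ∈ G.neighborSet i, perceived G C β s k j) := rfl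

lemma perceived_coll {x : V} (hx : x ∈ C) (s : ℕ) (j : V) :
    perceived G C β s x j = β x j := by
  cases s <;> simp [perceived_zero, perceived_succ, hx]

lemma perceived_succ_le (s : ℕ) (i j : V) :
    perceived G C β (s+1) i j ≤ perceived G C β s i j := by
  by_cases hx : i ∈ C
  · simp [perceived_coll _ _ _ hx]
  · rw [perceived_succ, if_neg hx]; exact min_le_left _ _

lemma perceived_antitone {s s' : ℕ} (h : s ≤ s') (i j : V) :
    perceived G C β s' i j ≤ perceived G C β s i j := by
  induction h with
  | refl => exact le_refl _
  | step h ih => exact le_trans (perceived_succ_le _ _ _ _ _ _) ih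

lemma one_add_iInf_le {i j : V} (hi : i ∉ C) (hij : i ≠ j) (s : ℕ) :
    1 + (⨅ k ∈ G.neighborSet i, perceived G C β s k j) ≤ perceived G C β s i j := by
  induction s with
  | zero => rw [perceived_zero, if_neg hi, if_neg hij]; exact le_top
  | succ s ih =>
      rw [perceived_succ, if_neg hi]
      have mono : (⨅ k ∈ G.neighborSet i, perceived G C β (s+1) k j)
          ≤ ⨅ k ∈ G.neighborSet i, perceived G C β s k j := by
        refine le_iInf₂ fun k hk => ?_
        exact le_trans (iInf₂_le k hk) (perceived_succ_le _ _ _ _ _ _)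
      exact le_min (le_trans (add_le_add_right mono 1) ih) (add_le_add_right mono 1)

lemma step_le {i k : V} (hi : i ∉ C) (hadj : G.Adj i k) (s : ℕ) (j : V) :
    perceived G C β (s+1) i j ≤ 1 + perceived G C β s k j := by
  rw [perceived_succ, if_neg hi]
  exact le_trans (min_le_right _ _)
    (add_le_add_right (iInf₂_le k ((G.mem_neighborSet i k).2 hadj)) 1)

lemma relay_le (j : V) : ∀ (L : ℕ) (q : ℕ → V), (∀ i < L, G.Adj (q i) (q (i+1))) →
    (∀ i < L, q i ∉ C) → ∀ s, perceived G C β (s + L) (q 0) j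
      ≤ (L : ℕ∞) + perceived G C β s (q L) j := by
  intro L
  induction L with
  | zero => intro q _ _ s; simp
  | succ L ih =>
      intro q hadj hhon s
      have h1 : perceived G C β (s + (L+1)) (q 0) j
          ≤ 1 + perceived G C β (s + L) (q 1) j := by
        have : s + (L + 1) = (s + L) + 1 := by omega
        rw [this]
        exact step_le G C β (hhon 0 (by omega)) (hadj 0 (by omega)) _ _
      have h2 := ih (fun i => q (i+1)) (fun i hi => hadj (i+1) (by omega))
        (fun i hi => hhon (i+1) (by omega)) s
      calc perceived G C β (s + (L+1)) (q 0) j ≤ 1 + perceived G C β (s + L) (q 1) j := h1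
        _ ≤ 1 + ((L : ℕ∞) + perceived G C β s (q (L+1)) j) := add_le_add_right h2 1
        _ = ((L+1 : ℕ) : ℕ∞) + perceived G C β s (q (L+1)) j := by
            push_cast; ring


section
variable (G : SimpleGraph V) (C : Finset V)

lemma coe_max (a b : ℕ) : ((max a b : ℕ) : ℕ∞) = max (a:ℕ∞) (b:ℕ∞) :=
  Monotone.map_max Nat.mono_cast

lemma rhoPrime_eq (y t : V) :
    rhoPrime G y t = ((max (G.dist y t - 2) 1 : ℕ) : ℕ∞) := by
  rw [rhoPrime, coe_max, ENat.coe_sub]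
  norm_num

lemma one_le_rhoPrime (y t : V) : 1 ≤ rhoPrime G y t := le_max_right _ _

variable [DecidableEq V]

lemma rhoStar_self (t : V) : rhoStar G C t t = 0 := if_pos rfl

lemma one_le_rhoStar {x t : V} (h : x ≠ t) : 1 ≤ rhoStar G C x t := by
  rw [rhoStar, if_neg h]
  refine le_min (one_le_rhoPrime G x t) ?_
  refine le_iInf₂ fun y _ => le_iInf₂ fun j _ => ?_
  exact le_trans (le_trans (one_le_rhoPrime G y t) le_add_self) (le_refl _)

lemma rhoStar_le_rhoPrime {x t : V} (h : x ≠ t) : rhoStar G C x t ≤ rhoPrime G x t := by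
  rw [rhoStar, if_neg h]; exact min_le_left _ _

lemma rhoStar_le_rhoPrime2 {x t : V} (h : x ≠ t) : rhoStar G C x t ≤ rhoPrime2 G C x t := by
  rw [rhoStar, if_neg h]; exact min_le_right _ _

lemma rhoPrime2_le {x t y : V} (hy : y ∈ C) {j : ℕ} (hj : j ∈ Finset.Icc 1 C.card) :
    rhoPrime2 G C x t ≤ collDist G C j x y - ((2 * (j - 1) : ℕ) : ℕ∞) + rhoPrime G y t :=
  le_trans (iInf₂_le y hy) (iInf₂_le j hj)

lemma collDist_le {x y : V} {j : ℕ} {σ : ℕ → V} (hP : σ 0 = x ∧ σ (j - 1) = y ∧ (∀ i < j, σ i ∈ C) ∧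
      ∀ a < j, ∀ b < j, σ a = σ b → a = b) :
    collDist G C j x y ≤ ∑ i ∈ Finset.range (j - 1), (G.dist (σ i) (σ (i + 1)) : ℕ∞) :=
  iInf₂_le σ hP

-- distance facts
lemma exists_adj_of_connected [Fintype V] (hG : G.Connected) (hn : 2 ≤ Fintype.card V) (v : V) :
    ∃ u, G.Adj v u := by
  obtain ⟨u, hu⟩ := Fintype.exists_ne_of_one_lt_card (by omega) v
  obtain ⟨p, -⟩ := (hG v u).exists_walk_length_eq_dist
  match p with
  | .nil => exact absurd rfl hu.symm
  | .cons h q => exact ⟨_, h⟩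

lemma exists_adj_dist (hG : G.Connected) {v t : V} {k : ℕ} (h : G.dist v t = k + 1) :
    ∃ u, G.Adj v u ∧ G.dist u t = k := by
  obtain ⟨p, hp⟩ := (hG v t).exists_walk_length_eq_dist
  match p, hp with
  | .cons (v := u) hadj q, hp =>
    refine ⟨u, hadj, le_antisymm ?_ ?_⟩
    · have := dist_le q
      simp [Walk.length_cons, h] at hp
      omega
    · have h1 : G.dist v u ≤ 1 := dist_le (Walk.cons hadj Walk.nil)
      have h2 := hG.dist_triangle (u := v) (v := u) (w := t)
      omega
  | .nil, hp => simp at h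

lemma two_le_dist_coll (hG : G.Connected)
    (hsep : ∀ x ∈ C, ∀ y ∈ C, ¬ G.Adj x y) {x y : V} (hx : x ∈ C) (hy : y ∈ C)
    (hne : x ≠ y) : 2 ≤ G.dist x y := by
  have h0 := hG.pos_dist_of_ne hne
  have h1 : G.dist x y ≠ 1 := fun h => hsep x hx y hy (dist_eq_one_iff_adj.1 h)
  omega

lemma dist_lt_card [Fintype V] (hG : G.Connected) (u v : V) :
    G.dist u v < Fintype.card V := by
  obtain ⟨p, hp⟩ := (hG u v).exists_walk_length_eq_dist
  have := (p.isPath_of_length_eq_dist hp).length_lt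
  omega

end

section

lemma perceived_self_star (t : V) (s : ℕ) :
    perceived G C (rhoStar G C) s t t = 0 := by
  by_cases ht : t ∈ C
  · rw [perceived_coll _ _ _ ht, rhoStar_self]
  · have h0 : perceived G C (rhoStar G C) 0 t t = 0 := by
      rw [perceived_zero, if_neg ht, if_pos rfl]
    exact le_antisymm (h0 ▸ perceived_antitone G C _ (Nat.zero_le s) t t) zero_le

lemma perceived_le_dist (hG : G.Connected) (t : V) :
    ∀ (k : ℕ) (s : ℕ) (v : V), G.dist v t = k → k ≤ s →
      perceived G C (rhoStar G C) s v t ≤ (k : ℕ∞) := by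
  intro k
  induction k with
  | zero =>
      intro s v hd _
      have hv : v = t := (hG.dist_eq_zero_iff).1 hd
      simp [hv, perceived_self_star]
  | succ k ih =>
      intro s v hd hs
      have hvt : v ≠ t := by
        intro h; rw [h, dist_self] at hd; omega
      by_cases hv : v ∈ C
      · rw [perceived_coll _ _ _ hv]
        refine le_trans (rhoStar_le_rhoPrime G C hvt) ?_
        rw [rhoPrime_eq, hd]
        exact Nat.cast_le.2 (max_le (by omega) (by omega))
      · obtain ⟨s', rfl⟩ : ∃ s', s = s' + 1 := ⟨s - 1, by omega⟩
        obtain ⟨u, hadj, hu⟩ := exists_adj_dist G hG hd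
        refine le_trans (step_le G C _ hv hadj s' t) ?_
        have := ih s' u hu (by omega)
        calc 1 + perceived G C (rhoStar G C) s' u t ≤ 1 + (k : ℕ∞) := add_le_add_right this 1
          _ = ((k+1 : ℕ) : ℕ∞) := by push_cast; ring

lemma rho_le_dist (hG : G.Connected) (v t : V) :
    rho G C (rhoStar G C) v t ≤ (G.dist v t : ℕ∞) :=
  perceived_le_dist G C hG t (G.dist v t) (Fintype.card V) v rfl
    (le_of_lt (dist_lt_card G hG v t))

lemma rho_coll {x : V} (hx : x ∈ C) (j : V) :
    rho G C (rhoStar G C) x j = rhoStar G C x j := perceived_coll _ _ _ hx _ _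

lemma rho_self_star (t : V) : rho G C (rhoStar G C) t t = 0 := perceived_self_star G C t _

lemma rho_one_add_iInf_le {i t : V} (hi : i ∉ C) (hit : i ≠ t) :
    1 + (⨅ k ∈ G.neighborSet i, rho G C β k t) ≤ rho G C β i t :=
  one_add_iInf_le G C β hi hit _

lemma one_le_rho {i t : V} (hi : i ∉ C) (hit : i ≠ t) :
    1 ≤ rho G C β i t :=
  le_trans le_self_add (rho_one_add_iInf_le G C β hi hit)

lemma rho_adj_coll_le {i x : V} (hn : 2 ≤ Fintype.card V)
    (hi : i ∉ C) (hx : x ∈ C) (hadj : G.Adj i x) (t : V) :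
    rho G C β i t ≤ 1 + β x t := by
  have hc : Fintype.card V = (Fintype.card V - 1) + 1 := by omega
  rw [rho, hc]
  exact le_trans (step_le G C β hi hadj _ t)
    (by rw [perceived_coll _ _ _ hx])

lemma exists_argmin_nbr (hG : G.Connected) (hn : 2 ≤ Fintype.card V) (v : V)
    (f : V → ℕ∞) : ∃ k, G.Adj v k ∧ ∀ k', G.Adj v k' → f k ≤ f k' := by
  classical
  have hne : (G.neighborFinset v).Nonempty := by
    obtain ⟨u, hu⟩ := exists_adj_of_connected G hG hn v
    exact ⟨u, (G.mem_neighborFinset v u).2 hu⟩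
  obtain ⟨k, hk, hmin⟩ := Finset.exists_min_image (G.neighborFinset v) f hne
  exact ⟨k, (G.mem_neighborFinset v k).1 hk,
    fun k' hk' => hmin k' ((G.mem_neighborFinset v k').2 hk')⟩

lemma rho_argmin_step (hG : G.Connected) (hn : 2 ≤ Fintype.card V)
    {i t : V} (hi : i ∉ C) (hit : i ≠ t) :
    ∃ k, G.Adj i k ∧ (∀ k', G.Adj i k' → rho G C β k t ≤ rho G C β k' t) ∧
      1 + rho G C β k t ≤ rho G C β i t := by
  obtain ⟨k, hadj, hmin⟩ := exists_argmin_nbr G hG hn i (fun u => rho G C β u t)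
  refine ⟨k, hadj, hmin, le_trans (add_le_add_right ?_ 1) (rho_one_add_iInf_le G C β hi hit)⟩
  exact le_iInf₂ fun u hu => hmin u ((G.mem_neighborSet i u).1 hu)

end

inductive Reaches (G : SimpleGraph V) (C : Finset V) (ρ : V → V → ℕ∞) (t : V) : V → Prop
  | base : Reaches G C ρ t t
  | honest {v k : V} : v ∉ C → inForwardSet G ρ v t k → Reaches G C ρ t k → Reaches G C ρ t v
  | coll {v k : V} : v ∈ C → G.Adj v k → Reaches G C ρ t k → Reaches G C ρ t v

section

lemma reaches_isCorrPath {G : SimpleGraph V} {C : Finset V} {β : V → V → ℕ∞} {t v : V}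
    (h : Reaches G C (rho G C β) t v) : ∃ ℓ f, IsCorrPath G C β v t ℓ f := by
  induction h with
  | base => exact ⟨0, fun _ => t, rfl, rfl, by omega, by omega⟩
  | @honest w k hw hfwd _ ih =>
      obtain ⟨ℓ, f, hf0, hfl, hfadj, hffwd⟩ := ih
      refine ⟨ℓ+1, fun i => if i = 0 then w else f (i-1), by simp, ?_, ?_, ?_⟩
      · simp [hfl]
      · intro i hi
        rcases Nat.eq_zero_or_pos i with rfl | hpos
        · simpa [hf0] using hfwd.2.1
        · have h1 : ¬ (i = 0) := by omega
          have h2 : ¬ (i + 1 = 0) := by omega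
          simp only [h1, h2, if_false]
          have : i - 1 + 1 = i + 1 - 1 := by omega
          rw [← this]
          exact hfadj (i-1) (by omega)
      · intro i hi hC
        rcases Nat.eq_zero_or_pos i with rfl | hpos
        · simpa [hf0] using hfwd
        · have h1 : ¬ (i = 0) := by omega
          have h2 : ¬ (i + 1 = 0) := by omega
          simp only [h1, h2, if_false] at hC ⊢
          have : i - 1 + 1 = i + 1 - 1 := by omega
          rw [← this]
          exact hffwd (i-1) (by omega) hC
  | @coll w k hw hadj _ ih =>
      obtain ⟨ℓ, f, hf0, hfl, hfadj, hffwd⟩ := ih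
      refine ⟨ℓ+1, fun i => if i = 0 then w else f (i-1), by simp, ?_, ?_, ?_⟩
      · simp [hfl]
      · intro i hi
        rcases Nat.eq_zero_or_pos i with rfl | hpos
        · simpa [hf0] using hadj
        · have h1 : ¬ (i = 0) := by omega
          have h2 : ¬ (i + 1 = 0) := by omega
          simp only [h1, h2, if_false]
          have : i - 1 + 1 = i + 1 - 1 := by omega
          rw [← this]
          exact hfadj (i-1) (by omega)
      · intro i hi hC
        rcases Nat.eq_zero_or_pos i with rfl | hpos
        · simp at hC; exact absurd hw hC
        · have h1 : ¬ (i = 0) := by omega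
          have h2 : ¬ (i + 1 = 0) := by omega
          simp only [h1, h2, if_false] at hC ⊢
          have : i - 1 + 1 = i + 1 - 1 := by omega
          rw [← this]
          exact hffwd (i-1) (by omega) hC

end

section
lemma enat_le_of_lt_succ {a : ℕ∞} {r : ℕ} (h : a < ((r+1:ℕ):ℕ∞)) : a ≤ (r:ℕ∞) := by
  lift a to ℕ using ne_top_of_lt h
  exact_mod_cast Nat.lt_succ_iff.mp (by exact_mod_cast h)

lemma enat_coe_lt_succ (r : ℕ) : (r:ℕ∞) < ((r+1:ℕ):ℕ∞) := by exact_mod_cast Nat.lt_succ_self r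

lemma dist_getVert_le {G : SimpleGraph V} (hG : G.Connected) {a b : V} (p : G.Walk a b)
    {i : ℕ} (hi : i ≤ p.length) :
    G.dist a (p.getVert i) ≤ i ∧ G.dist (p.getVert i) b ≤ p.length - i := by
  constructor
  · clear hi
    induction i with
    | zero => simp [dist_self]
    | succ k ih =>
        by_cases hk : k + 1 ≤ p.length
        · have hadj : G.Adj (p.getVert k) (p.getVert (k+1)) := p.adj_getVert_succ (by omega)
          have ht := hG.dist_triangle (u := a) (v := p.getVert k) (w := p.getVert (k+1))
          have hd1 : G.dist (p.getVert k) (p.getVert (k+1)) ≤ 1 :=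
            dist_le (Walk.cons hadj Walk.nil)
          omega
        · have : p.getVert (k+1) = b := p.getVert_of_length_le (by omega)
          have hk' : p.getVert k = b := by
            rcases Nat.lt_or_ge k p.length with h | h
            · have : k = p.length := by omega
              rw [this, Walk.getVert_length]
            · exact p.getVert_of_length_le h
          rw [this, ← hk']
          omega
  · have key : ∀ k, G.dist (p.getVert (p.length - k)) b ≤ k := by
      intro k
      induction k with
      | zero => simp [Walk.getVert_length, dist_self]
      | succ k ih =>
          by_cases hk : p.length ≤ k
          · have h1 : p.length - (k+1) = 0 := by omega
            have h2 : p.length - k = 0 := by omega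
            rw [h1]; rw [h2] at ih; omega
          · have hidx : p.length - (k+1) + 1 = p.length - k := by omega
            have hadj : G.Adj (p.getVert (p.length - (k+1))) (p.getVert (p.length - k)) := by
              rw [← hidx]; exact p.adj_getVert_succ (by omega)
            have ht := hG.dist_triangle (u := p.getVert (p.length - (k+1)))
              (v := p.getVert (p.length - k)) (w := b)
            have hd1 : G.dist (p.getVert (p.length - (k+1))) (p.getVert (p.length - k)) ≤ 1 :=
              dist_le (Walk.cons hadj Walk.nil)
            omega
    have := key (p.length - i)
    rwa [Nat.sub_sub_self hi] at this

lemma dist_getVert_eq {G : SimpleGraph V} (hG : G.Connected) {a b : V} (p : G.Walk a b)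
    (hp : p.length = G.dist a b) {i : ℕ} (hi : i ≤ p.length) :
    G.dist a (p.getVert i) = i ∧ G.dist (p.getVert i) b = p.length - i := by
  obtain ⟨h1, h2⟩ := dist_getVert_le hG p hi
  have ht := hG.dist_triangle (u := a) (v := p.getVert i) (w := b)
  omega

end



theorem reaches_all (G : SimpleGraph V) (C : Finset V) (hG : G.Connected)
    (hn : 2 ≤ Fintype.card V) (hsep : ∀ x ∈ C, ∀ y ∈ C, ¬ G.Adj x y) (t : V) :
    ∀ v, Reaches G C (rho G C (rhoStar G C)) t v := by
  classical
  suffices H : ∀ r : ℕ, ∀ v, rho G C (rhoStar G C) v t = (r:ℕ∞) →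
      Reaches G C (rho G C (rhoStar G C)) t v by
    intro v
    have hfin : rho G C (rhoStar G C) v t ≠ ⊤ := by
      intro h
      have := rho_le_dist G C hG v t
      rw [h] at this
      exact (by simp : ¬ ((⊤:ℕ∞) ≤ (G.dist v t : ℕ∞))) this
    exact H (rho G C (rhoStar G C) v t).toNat v (ENat.coe_toNat hfin).symm
  intro r
  induction r using Nat.strong_induction_on with
  | _ r IH =>
  intro v hv
  have H1 : ∀ w, rho G C (rhoStar G C) w t < (r:ℕ∞) → Reaches G C (rho G C (rhoStar G C)) t w := by
    intro w hw
    have hfin : rho G C (rhoStar G C) w t ≠ ⊤ := ne_top_of_lt hw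
    refine IH (rho G C (rhoStar G C) w t).toNat ?_ w (ENat.coe_toNat hfin).symm
    exact_mod_cast (ENat.coe_toNat hfin).symm ▸ hw
  have Hhon : ∀ w, w ∉ C → rho G C (rhoStar G C) w t = (r:ℕ∞) →
      Reaches G C (rho G C (rhoStar G C)) t w := by
    intro w hwC hwr
    by_cases hwt : w = t
    · exact hwt ▸ Reaches.base
    · obtain ⟨k, hadj, hmin, hstep⟩ := rho_argmin_step G C (rhoStar G C) hG hn hwC hwt
      have hklt : rho G C (rhoStar G C) k t < (r:ℕ∞) := by
        rw [hwr] at hstep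
        have hne : rho G C (rhoStar G C) k t ≠ ⊤ := by
          intro h; rw [h] at hstep; simp at hstep
        rw [add_comm] at hstep
        exact (ENat.add_one_le_iff hne).1 hstep
      exact Reaches.honest hwC ⟨hwt, hadj, hmin⟩ (H1 k hklt)
  rcases Nat.eq_zero_or_pos r with rfl | hr
  · by_cases hvC : v ∈ C
    · by_cases hvt : v = t
      · exact hvt ▸ Reaches.base
      · exfalso
        have h1 := one_le_rhoStar G C hvt
        rw [← rho_coll G C hvC, hv] at h1
        simp at h1
    · exact Hhon v hvC hv
  by_cases hvC : v ∈ C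
  swap
  · exact Hhon v hvC hv
  by_contra hnR
  have hvt : v ≠ t := by
    rintro rfl
    rw [rho_self_star] at hv
    have : r = 0 := by exact_mod_cast hv.symm
    omega
  -- F1
  have F1 : ∀ z, (z ∈ C ∧ ¬ Reaches G C (rho G C (rhoStar G C)) t z ∧
        rho G C (rhoStar G C) z t = (r:ℕ∞)) → ∀ k, G.Adj z k →
      k ∉ C ∧ ¬ Reaches G C (rho G C (rhoStar G C)) t k ∧
        rho G C (rhoStar G C) k t = (r:ℕ∞) + 1 := by
    intro z hz k hadj
    have hkC : k ∉ C := fun hk => hsep z hz.1 k hk hadj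
    have hkR : ¬ Reaches G C (rho G C (rhoStar G C)) t k :=
      fun h => hz.2.1 (Reaches.coll hz.1 hadj h)
    have hkt : k ≠ t := by rintro rfl; exact hkR Reaches.base
    refine ⟨hkC, hkR, le_antisymm ?_ ?_⟩
    · have h := rho_adj_coll_le G C (rhoStar G C) hn hkC hz.1 hadj.symm t
      rw [← rho_coll G C hz.1 t, hz.2.2] at h
      calc rho G C (rhoStar G C) k t ≤ 1 + (r:ℕ∞) := h
        _ = (r:ℕ∞) + 1 := add_comm _ _
    · by_contra hlt
      push_neg at hlt
      have hle : rho G C (rhoStar G C) k t ≤ (r:ℕ∞) :=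
        enat_le_of_lt_succ (by exact_mod_cast hlt)
      rcases lt_or_eq_of_le hle with h | h
      · exact hkR (H1 k h)
      · exact hkR (Hhon k hkC h)
  -- F2
  have F2 : ∀ z, (z ∈ C ∧ ¬ Reaches G C (rho G C (rhoStar G C)) t z ∧
        rho G C (rhoStar G C) z t = (r:ℕ∞)) → ∀ k, G.Adj z k → ∀ u, G.Adj k u →
      ((r:ℕ∞) ≤ rho G C (rhoStar G C) u t ∧ (rho G C (rhoStar G C) u t = (r:ℕ∞) →
        (u ∈ C ∧ ¬ Reaches G C (rho G C (rhoStar G C)) t u ∧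
          rho G C (rhoStar G C) u t = (r:ℕ∞)))) := by
    intro z hz k hadjzk u hadjku
    obtain ⟨hkC, hkR, hkρ⟩ := F1 z hz k hadjzk
    have hkt : k ≠ t := by
      rintro rfl
      rw [rho_self_star] at hkρ
      have : (0:ℕ) = r + 1 := by exact_mod_cast hkρ
      omega
    have hlow : ∀ u', G.Adj k u' → (r:ℕ∞) ≤ rho G C (rhoStar G C) u' t := by
      intro u' hu'
      by_contra hlt
      push_neg at hlt
      obtain ⟨k0, hk0adj, hk0min, _⟩ := rho_argmin_step G C (rhoStar G C) hG hn hkC hkt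
      have hk0lt : rho G C (rhoStar G C) k0 t < (r:ℕ∞) :=
        lt_of_le_of_lt (hk0min u' hu') hlt
      exact hkR (Reaches.honest hkC ⟨hkt, hk0adj, hk0min⟩ (H1 k0 hk0lt))
    refine ⟨hlow u hadjku, fun hur => ?_⟩
    have hfwd : inForwardSet G (rho G C (rhoStar G C)) k t u :=
      ⟨hkt, hadjku, fun k' hk' => hur ▸ hlow k' hk'⟩
    have huR : ¬ Reaches G C (rho G C (rhoStar G C)) t u :=
      fun h => hkR (Reaches.honest hkC hfwd h)
    have huC : u ∈ C := by
      by_contra huC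
      exact huR (Hhon u huC hur)
    exact ⟨huC, huR, hur⟩
  -- F3
  have F3 : ∀ z, (z ∈ C ∧ ¬ Reaches G C (rho G C (rhoStar G C)) t z ∧
        rho G C (rhoStar G C) z t = (r:ℕ∞)) → rhoPrime G z t ≤ (r:ℕ∞) → False := by
    intro z hz hle
    have hzt : z ≠ t := by
      rintro rfl
      rw [rho_self_star] at hz
      have : (0:ℕ) = r := by exact_mod_cast hz.2.2
      omega
    have hd1 : 1 ≤ G.dist z t := hG.pos_dist_of_ne hzt
    obtain ⟨u1, hadj1, hu1d⟩ := exists_adj_dist G hG (show G.dist z t = (G.dist z t - 1) + 1 by omega)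
    obtain ⟨-, -, hu1ρ⟩ := F1 z hz u1 hadj1
    have hr1 : r + 1 ≤ G.dist z t - 1 := by
      have h := rho_le_dist G C hG u1 t
      rw [hu1d, hu1ρ] at h
      exact_mod_cast h
    have hple : max (G.dist z t - 2) 1 ≤ r := by
      rw [rhoPrime_eq] at hle
      exact_mod_cast hle
    have hdr : G.dist z t = r + 2 := by omega
    obtain ⟨u2, hadj2, hu2d⟩ := exists_adj_dist G hG
      (show G.dist u1 t = (G.dist z t - 2) + 1 by omega)
    have hb2 : rho G C (rhoStar G C) u2 t ≤ ((G.dist z t - 2:ℕ):ℕ∞) :=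
      hu2d ▸ rho_le_dist G C hG u2 t
    have hlow := (F2 z hz u1 hadj1 u2 hadj2).1
    have hu2ρ : rho G C (rhoStar G C) u2 t = (r:ℕ∞) := by
      exact le_antisymm (le_trans hb2 (Nat.cast_le.2 (show G.dist z t - 2 ≤ r by omega))) hlow
    have hBu2 := (F2 z hz u1 hadj1 u2 hadj2).2 hu2ρ
    have hu2t : u2 ≠ t := by
      intro h
      rw [h, SimpleGraph.dist_self] at hu2d
      omega
    rcases Nat.lt_or_ge r 2 with hr2 | hr2
    · have hdu2 : G.dist u2 t = 1 := by omega
      exact hBu2.2.1 (Reaches.coll hBu2.1 (dist_eq_one_iff_adj.1 hdu2) Reaches.base)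
    · have h1 : rho G C (rhoStar G C) u2 t ≤ rhoPrime G u2 t := by
        rw [rho_coll G C hBu2.1]
        exact rhoStar_le_rhoPrime G C hu2t
      rw [rhoPrime_eq, hu2d, hu2ρ] at h1
      have : (r:ℕ) ≤ max (G.dist z t - 2 - 2) 1 := by exact_mod_cast h1
      omega
  -- ρ'' v t = r and witness extraction
  have hρ'v : min (rhoPrime G v t) (rhoPrime2 G C v t) = (r:ℕ∞) := by
    have h := hv
    rw [rho_coll G C hvC, rhoStar, if_neg hvt] at h
    exact h
  have hp2v : rhoPrime2 G C v t = (r:ℕ∞) := by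
    rcases min_cases (rhoPrime G v t) (rhoPrime2 G C v t) with ⟨h1, h2⟩ | ⟨h1, h2⟩
    · exact absurd (le_of_eq (h1 ▸ hρ'v)) (fun hh => F3 v ⟨hvC, hnR, hv⟩ hh)
    · exact h1 ▸ hρ'v
  have hWit : ∃ j, 1 ≤ j ∧ j ≤ C.card ∧ ∃ (z y : V) (σ : ℕ → V),
      (z ∈ C ∧ ¬ Reaches G C (rho G C (rhoStar G C)) t z ∧
        rho G C (rhoStar G C) z t = (r:ℕ∞)) ∧
      y ∈ C ∧
      (σ 0 = z ∧ σ (j-1) = y ∧ (∀ i < j, σ i ∈ C) ∧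
        ∀ a < j, ∀ b < j, σ a = σ b → a = b) ∧
      (∑ i ∈ range (j-1), (G.dist (σ i) (σ (i+1)):ℕ∞)) - ((2*(j-1):ℕ):ℕ∞)
        + rhoPrime G y t = (r:ℕ∞) := by
    have h1 : rhoPrime2 G C v t < ((r+1:ℕ):ℕ∞) := by rw [hp2v]; exact enat_coe_lt_succ r
    rw [rhoPrime2] at h1
    obtain ⟨y, h1⟩ := iInf_lt_iff.mp h1
    obtain ⟨hyC, h1⟩ := iInf_lt_iff.mp h1
    obtain ⟨j, h1⟩ := iInf_lt_iff.mp h1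
    obtain ⟨hjIcc, h1⟩ := iInf_lt_iff.mp h1
    have hle2 : collDist G C j v y - ((2*(j-1):ℕ):ℕ∞) + rhoPrime G y t ≤ (r:ℕ∞) :=
      enat_le_of_lt_succ h1
    have hge2 : (r:ℕ∞) ≤ collDist G C j v y - ((2*(j-1):ℕ):ℕ∞) + rhoPrime G y t := by
      rw [← hp2v]; exact rhoPrime2_le G C hyC hjIcc
    have hexpr := le_antisymm hle2 hge2
    have hCfin : collDist G C j v y ≠ ⊤ := by
      intro h
      rw [h, ENat.top_sub_coe, top_add] at hexpr
      exact (by simp : ((⊤:ℕ∞) ≠ (r:ℕ∞))) hexpr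
    have hc := ENat.coe_toNat hCfin
    have h2 : collDist G C j v y < (((collDist G C j v y).toNat + 1 : ℕ):ℕ∞) :=
      hc ▸ enat_coe_lt_succ _
    unfold collDist at h2
    obtain ⟨σ, h2⟩ := iInf_lt_iff.mp h2
    obtain ⟨hPσ, h2⟩ := iInf_lt_iff.mp h2
    have hsle : ∑ i ∈ range (j-1), (G.dist (σ i) (σ (i+1)):ℕ∞) ≤ collDist G C j v y := by
      rw [← hc]; exact enat_le_of_lt_succ h2
    have hsge := collDist_le G C hPσ
    have hsum := le_antisymm hsge hsle
    have hjb := Finset.mem_Icc.1 hjIcc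
    exact ⟨j, hjb.1, hjb.2, v, y, σ, ⟨hvC, hnR, hv⟩, hyC, hPσ, by rw [← hsum]; exact hexpr⟩
  set Wset : Set ℕ := {j | 1 ≤ j ∧ j ≤ C.card ∧ ∃ (z y : V) (σ : ℕ → V),
      (z ∈ C ∧ ¬ Reaches G C (rho G C (rhoStar G C)) t z ∧
        rho G C (rhoStar G C) z t = (r:ℕ∞)) ∧
      y ∈ C ∧
      (σ 0 = z ∧ σ (j-1) = y ∧ (∀ i < j, σ i ∈ C) ∧
        ∀ a < j, ∀ b < j, σ a = σ b → a = b) ∧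
      (∑ i ∈ range (j-1), (G.dist (σ i) (σ (i+1)):ℕ∞)) - ((2*(j-1):ℕ):ℕ∞)
        + rhoPrime G y t = (r:ℕ∞)} with hWdef
  have hWne : Wset.Nonempty := hWit
  have hj0W : sInf Wset ∈ Wset := Nat.sInf_mem hWne
  set j0 := sInf Wset with hj0def
  obtain ⟨hj01, hj0c, z, y, σ, hBz, hyC, ⟨hσ0, hσl, hσC, hσinj⟩, heq⟩ := hj0W
  have hzt : z ≠ t := by
    rintro rfl
    rw [rho_self_star] at hBz
    have : (0:ℕ) = r := by exact_mod_cast hBz.2.2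
    omega
  -- ℕ versions of the equation
  have hpy := rhoPrime_eq G y t
  have hsumc : (∑ i ∈ range (j0-1), (G.dist (σ i) (σ (i+1)):ℕ∞))
      = ((∑ i ∈ range (j0-1), G.dist (σ i) (σ (i+1)) : ℕ) : ℕ∞) := by
    rw [Nat.cast_sum]
  have heqn : (∑ i ∈ range (j0-1), G.dist (σ i) (σ (i+1))) - 2*(j0-1)
      + max (G.dist y t - 2) 1 = r := by
    have h : ((((∑ i ∈ range (j0-1), G.dist (σ i) (σ (i+1))) - 2*(j0-1)
        + max (G.dist y t - 2) 1 : ℕ)) : ℕ∞) = ((r:ℕ):ℕ∞) := by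
      rw [Nat.cast_add, ENat.coe_sub, ← hsumc, ← hpy]
      exact heq
    exact_mod_cast h
  by_cases hj0eq : j0 = 1
  · have h00 : σ 0 = y := by rw [hj0eq] at hσl; simpa using hσl
    have hyz : y = z := by rw [← h00, hσ0]
    apply F3 z hBz
    rw [rhoPrime_eq]
    have hSn0 : (∑ i ∈ range (j0-1), G.dist (σ i) (σ (i+1))) = 0 := by rw [hj0eq]; simp
    rw [hyz, hSn0, hj0eq] at heqn
    have hmx : max (G.dist z t - 2) 1 = r := by omega
    exact Nat.cast_le.2 (le_of_eq hmx)
  · have hj02 : 2 ≤ j0 := by omega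
    set z' := σ 1 with hz'def
    have hz'C : z' ∈ C := hσC 1 (by omega)
    have hzz' : z ≠ z' := by
      intro h
      have := hσinj 0 (by omega) 1 (by omega) (by rw [hσ0, ← hz'def, ← h])
      omega
    set m := G.dist z z' with hmdef
    have hm2 : 2 ≤ m := two_le_dist_coll G C hG hsep hBz.1 hz'C hzz'
    have hsplit : (∑ i ∈ range (j0-1), G.dist (σ i) (σ (i+1)))
        = (∑ i ∈ range (j0-2), G.dist (σ (i+1)) (σ (i+2))) + m := by
      rw [show j0 - 1 = (j0-2) + 1 by omega, Finset.sum_range_succ']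
      rw [hσ0, ← hz'def]
    set Sn' := ∑ i ∈ range (j0-2), G.dist (σ (i+1)) (σ (i+2)) with hSn'def
    have hSn'lb : 2*(j0-2) ≤ Sn' := by
      have hterms : ∀ i ∈ range (j0-2), 2 ≤ G.dist (σ (i+1)) (σ (i+2)) := by
        intro i hi
        have hi' := Finset.mem_range.1 hi
        exact two_le_dist_coll G C hG hsep (hσC _ (by omega)) (hσC _ (by omega))
          (fun hh => by have := hσinj (i+1) (by omega) (i+2) (by omega) hh; omega)
      have h := Finset.card_nsmul_le_sum (range (j0-2))
        (fun i => G.dist (σ (i+1)) (σ (i+2))) 2 hterms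
      rw [Finset.card_range, smul_eq_mul] at h
      omega
    have hP' : (fun i => σ (i+1)) 0 = z' ∧ (fun i => σ (i+1)) ((j0-1)-1) = y ∧
        (∀ i < j0-1, (fun i => σ (i+1)) i ∈ C) ∧
        ∀ a < j0-1, ∀ b < j0-1, (fun i => σ (i+1)) a = (fun i => σ (i+1)) b → a = b := by
      refine ⟨hz'def.symm, ?_, fun i hi => hσC _ (by omega), fun a ha b hb h => ?_⟩
      · show σ ((j0-1)-1+1) = y
        rw [show (j0-1)-1+1 = j0-1 by omega]
        exact hσl
      · have := hσinj (a+1) (by omega) (b+1) (by omega) h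
        omega
    have hsum' : (∑ i ∈ range ((j0-1)-1),
        (G.dist ((fun i => σ (i+1)) i) ((fun i => σ (i+1)) (i+1)) : ℕ∞)) = ((Sn' : ℕ) : ℕ∞) := by
      rw [show (j0-1)-1 = j0-2 by omega, Nat.cast_sum]
    have hub : rhoStar G C z' t
        ≤ ((Sn' - 2*(j0-2) + max (G.dist y t - 2) 1 : ℕ) : ℕ∞) := by
      by_cases hz't : z' = t
      · rw [hz't, rhoStar_self]; exact zero_le
      · refine le_trans (rhoStar_le_rhoPrime2 G C hz't) ?_
        refine le_trans (rhoPrime2_le G C hyC (j := j0-1)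
          (Finset.mem_Icc.2 ⟨by omega, by omega⟩)) ?_
        have h1 : collDist G C (j0-1) z' y ≤ ((Sn':ℕ):ℕ∞) :=
          le_trans (collDist_le G C hP') (le_of_eq hsum')
        calc collDist G C (j0-1) z' y - ((2*((j0-1)-1):ℕ):ℕ∞) + rhoPrime G y t
            ≤ ((Sn':ℕ):ℕ∞) - ((2*((j0-1)-1):ℕ):ℕ∞)
              + ((max (G.dist y t - 2) 1:ℕ):ℕ∞) :=
              add_le_add (tsub_le_tsub_right h1 _) (le_of_eq hpy)
          _ = _ := by
              rw [show (j0-1)-1 = j0-2 by omega, ← ENat.coe_sub, ← Nat.cast_add]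
    obtain ⟨p, hp⟩ := (hG z z').exists_walk_length_eq_dist
    have hpl : p.length = m := by rw [hmdef]; exact hp
    have hmcard : m < Fintype.card V := by rw [hmdef]; exact dist_lt_card G hG z z'
    by_cases hint : ∃ i, 1 ≤ i ∧ i ≤ m - 1 ∧ p.getVert i ∈ C
    · obtain ⟨i, hi1, him, hiC⟩ := hint
      have hile : i ≤ p.length := by omega
      obtain ⟨hdzi, hdiz'⟩ := dist_getVert_eq hG p hp hile
      rw [hpl] at hdiz'
      have hi2 : 2 ≤ i := by
        rcases Nat.lt_or_ge i 2 with h | h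
        · exfalso
          have hie : i = 1 := by omega
          subst hie
          have hadj : G.Adj z (p.getVert 1) := by
            have := p.adj_getVert_succ (show 0 < p.length by omega)
            rwa [p.getVert_zero] at this
          exact hsep z hBz.1 _ hiC hadj
        · exact h
      have him2 : i ≤ m - 2 := by
        rcases Nat.lt_or_ge (m-2) i with h | h
        · exfalso
          have hie : i = m - 1 := by omega
          subst hie
          have hadj : G.Adj (p.getVert (m-1)) z' := by
            have h2 := p.adj_getVert_succ (show m - 1 < p.length by omega)
            rw [show m - 1 + 1 = p.length by omega, p.getVert_length] at h2
            exact h2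
          exact hsep _ hiC z' hz'C hadj
        · exact h
      have hrle : (r:ℕ∞) ≤ rhoPrime2 G C z t := by
        have h := hBz.2.2
        rw [rho_coll G C hBz.1, rhoStar, if_neg hzt] at h
        exact h ▸ min_le_right _ _
      by_cases hfresh : ∃ a, a < j0 ∧ σ a = p.getVert i
      · obtain ⟨a, haj, haeq⟩ := hfresh
        have ha0 : a ≠ 0 := by
          rintro rfl
          rw [hσ0] at haeq
          rw [← haeq, SimpleGraph.dist_self] at hdzi
          omega
        have ha1 : a ≠ 1 := by
          rintro rfl
          rw [← hz'def] at haeq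
          rw [← haeq, SimpleGraph.dist_self] at hdiz'
          omega
        have ha2 : 2 ≤ a := by omega
        set τ : ℕ → V := fun b => if b = 0 then z else σ (a + b - 1) with hτdef
        have hτ0 : τ 0 = z := rfl
        have hτs : ∀ b, 1 ≤ b → τ b = σ (a + b - 1) := fun b hb => by
          simp only [hτdef]; rw [if_neg (by omega)]
        have hPτ : τ 0 = z ∧ τ ((j0 - a + 1) - 1) = y ∧ (∀ b < j0 - a + 1, τ b ∈ C) ∧
            ∀ b < j0 - a + 1, ∀ b' < j0 - a + 1, τ b = τ b' → b = b' := by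
          refine ⟨rfl, ?_, ?_, ?_⟩
          · rw [hτs _ (by omega), show a + ((j0 - a + 1) - 1) - 1 = j0 - 1 by omega]
            exact hσl
          · intro b hb
            rcases Nat.eq_zero_or_pos b with rfl | hbpos
            · exact hBz.1
            · rw [hτs _ hbpos]; exact hσC _ (by omega)
          · intro b hb b' hb' hbb
            rcases Nat.eq_zero_or_pos b with rfl | hbpos <;>
              rcases Nat.eq_zero_or_pos b' with rfl | hb'pos
            · rfl
            · exfalso
              rw [hτ0, hτs _ hb'pos] at hbb
              have := hσinj 0 (by omega) (a + b' - 1) (by omega) (by rw [hσ0, hbb])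
              omega
            · exfalso
              rw [hτ0, hτs _ hbpos] at hbb
              have := hσinj (a + b - 1) (by omega) 0 (by omega) (by rw [hσ0, ← hbb])
              omega
            · rw [hτs _ hbpos, hτs _ hb'pos] at hbb
              have := hσinj (a + b - 1) (by omega) (a + b' - 1) (by omega) hbb
              omega
        have hNat : (∑ b ∈ range ((j0 - a + 1) - 1), G.dist (τ b) (τ (b+1)))
            = i + ∑ b ∈ range (j0 - 1 - a), G.dist (σ (a+b)) (σ (a+b+1)) := by
          rw [show (j0 - a + 1) - 1 = (j0 - 1 - a) + 1 by omega, Finset.sum_range_succ']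
          have h1 : ∀ b ∈ range (j0 - 1 - a),
              G.dist (τ (b+1)) (τ (b+1+1)) = G.dist (σ (a+b)) (σ (a+b+1)) := by
            intro b _
            rw [hτs _ (by omega), hτs _ (by omega),
              show a + (b+1) - 1 = a + b by omega, show a + (b+1+1) - 1 = a + b + 1 by omega]
          have h0 : G.dist (τ 0) (τ 1) = i := by
            rw [hτ0, hτs _ (by omega), show a + 1 - 1 = a by omega, haeq]
            exact hdzi
          rw [Finset.sum_congr rfl h1, h0, Nat.add_comm]
        have hτsum : (∑ b ∈ range ((j0 - a + 1) - 1), (G.dist (τ b) (τ (b+1)) : ℕ∞))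
            = ((i + ∑ b ∈ range (j0 - 1 - a), G.dist (σ (a+b)) (σ (a+b+1)) : ℕ) : ℕ∞) := by
          rw [← hNat, Nat.cast_sum]
        have hSsplit : (∑ b ∈ range (j0 - 1), G.dist (σ b) (σ (b+1)))
            = (∑ b ∈ range a, G.dist (σ b) (σ (b+1)))
              + ∑ b ∈ range (j0 - 1 - a), G.dist (σ (a+b)) (σ (a+b+1)) := by
          conv_lhs => rw [show j0 - 1 = a + (j0 - 1 - a) by omega, Finset.sum_range_add]
        have hPn : m + 2*(a-1) ≤ ∑ b ∈ range a, G.dist (σ b) (σ (b+1)) := by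
          conv_rhs => rw [show a = 1 + (a - 1) by omega, Finset.sum_range_add]
          have h1 : ∑ b ∈ range 1, G.dist (σ b) (σ (b+1)) = m := by
            rw [Finset.sum_range_one, hσ0, ← hz'def]
          have h2 : ∀ b ∈ range (a-1), 2 ≤ G.dist (σ (1+b)) (σ (1+b+1)) := by
            intro b hb
            have hb' := Finset.mem_range.1 hb
            exact two_le_dist_coll G C hG hsep (hσC _ (by omega)) (hσC _ (by omega))
              (fun hh => by have := hσinj (1+b) (by omega) (1+b+1) (by omega) hh; omega)
          have h3 := Finset.card_nsmul_le_sum (range (a-1))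
            (fun b => G.dist (σ (1+b)) (σ (1+b+1))) 2 h2
          rw [Finset.card_range, smul_eq_mul] at h3
          omega
        have hT2 : 2*(j0-1-a) ≤ ∑ b ∈ range (j0 - 1 - a), G.dist (σ (a+b)) (σ (a+b+1)) := by
          have h2 : ∀ b ∈ range (j0-1-a), 2 ≤ G.dist (σ (a+b)) (σ (a+b+1)) := by
            intro b hb
            have hb' := Finset.mem_range.1 hb
            exact two_le_dist_coll G C hG hsep (hσC _ (by omega)) (hσC _ (by omega))
              (fun hh => by have := hσinj (a+b) (by omega) (a+b+1) (by omega) hh; omega)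
          have h3 := Finset.card_nsmul_le_sum (range (j0-1-a))
            (fun b => G.dist (σ (a+b)) (σ (a+b+1))) 2 h2
          rw [Finset.card_range, smul_eq_mul] at h3
          omega
        have hval : (r:ℕ∞) ≤ (((i + ∑ b ∈ range (j0 - 1 - a), G.dist (σ (a+b)) (σ (a+b+1)))
            - 2*((j0 - a + 1) - 1) + max (G.dist y t - 2) 1 : ℕ):ℕ∞) := by
          refine le_trans hrle ?_
          refine le_trans (rhoPrime2_le G C hyC (j := j0 - a + 1)
            (Finset.mem_Icc.2 ⟨by omega, by omega⟩)) ?_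
          have h1 : collDist G C (j0 - a + 1) z y
              ≤ ((i + ∑ b ∈ range (j0 - 1 - a), G.dist (σ (a+b)) (σ (a+b+1)) : ℕ):ℕ∞) :=
            le_trans (collDist_le G C hPτ) (le_of_eq hτsum)
          calc collDist G C (j0 - a + 1) z y - ((2*((j0 - a + 1)-1):ℕ):ℕ∞) + rhoPrime G y t
              ≤ ((i + ∑ b ∈ range (j0 - 1 - a), G.dist (σ (a+b)) (σ (a+b+1)) : ℕ):ℕ∞)
                - ((2*((j0 - a + 1)-1):ℕ):ℕ∞) + ((max (G.dist y t - 2) 1:ℕ):ℕ∞) :=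
                add_le_add (tsub_le_tsub_right h1 _) (le_of_eq hpy)
            _ = _ := by rw [← ENat.coe_sub, ← Nat.cast_add]
        have hvaln : r ≤ (i + ∑ b ∈ range (j0 - 1 - a), G.dist (σ (a+b)) (σ (a+b+1)))
            - 2*((j0 - a + 1) - 1) + max (G.dist y t - 2) 1 := by exact_mod_cast hval
        omega
      · push_neg at hfresh
        have hzqi : z ≠ p.getVert i := by
          intro h
          rw [← h, SimpleGraph.dist_self] at hdzi
          omega
        have hz'qi : z' ≠ p.getVert i := by
          intro h
          rw [← h, SimpleGraph.dist_self] at hdiz'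
          omega
        set τ : ℕ → V := fun b => if b = 0 then z else if b = 1 then p.getVert i
          else σ (b - 1) with hτdef
        have hτ0 : τ 0 = z := rfl
        have hτ1 : τ 1 = p.getVert i := rfl
        have hτs : ∀ b, 2 ≤ b → τ b = σ (b - 1) := fun b hb => by
          simp only [hτdef]; rw [if_neg (by omega), if_neg (by omega)]
        have hPτ : τ 0 = z ∧ τ ((j0 + 1) - 1) = y ∧ (∀ b < j0 + 1, τ b ∈ C) ∧
            ∀ b < j0 + 1, ∀ b' < j0 + 1, τ b = τ b' → b = b' := by
          refine ⟨rfl, ?_, ?_, ?_⟩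
          · rw [show (j0 + 1) - 1 = j0 by omega, hτs _ (by omega)]
            exact hσl
          · intro b hb
            match b, hb with
            | 0, _ => exact hBz.1
            | 1, _ => exact hiC
            | (b+2), hb => rw [hτs _ (by omega)]; exact hσC _ (by omega)
          · intro b hb b' hb' hbb
            match b, hb, b', hb', hbb with
            | 0, _, 0, _, _ => rfl
            | 0, _, 1, _, hbb => exact absurd hbb hzqi
            | 1, _, 0, _, hbb => exact absurd hbb.symm hzqi
            | 1, _, 1, _, _ => rfl
            | 0, _, (b'+2), hb', hbb =>
                exfalso
                rw [hτ0, hτs _ (by omega)] at hbb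
                have := hσinj 0 (by omega) (b'+2-1) (by omega) (by rw [hσ0, hbb])
                omega
            | (b+2), hb, 0, _, hbb =>
                exfalso
                rw [hτ0, hτs _ (by omega)] at hbb
                have := hσinj 0 (by omega) (b+2-1) (by omega) (by rw [hσ0, ← hbb])
                omega
            | 1, _, (b'+2), hb', hbb =>
                exfalso
                rw [hτ1, hτs _ (by omega)] at hbb
                exact hfresh (b'+2-1) (by omega) hbb.symm
            | (b+2), hb, 1, _, hbb =>
                exfalso
                rw [hτ1, hτs _ (by omega)] at hbb
                exact hfresh (b+2-1) (by omega) hbb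
            | (b+2), hb, (b'+2), hb', hbb =>
                rw [hτs _ (by omega), hτs _ (by omega)] at hbb
                have := hσinj (b+2-1) (by omega) (b'+2-1) (by omega) hbb
                omega
        have hccard : j0 + 1 ≤ C.card := by
          have hsub : (range (j0+1)).image τ ⊆ C := by
            intro x hx
            obtain ⟨b, hb, rfl⟩ := Finset.mem_image.1 hx
            exact hPτ.2.2.1 b (Finset.mem_range.1 hb)
          have hinj := Finset.card_image_of_injOn
            (f := τ) (s := range (j0+1))
            (fun b hb b' hb' h =>
              hPτ.2.2.2 b (Finset.mem_range.1 hb) b' (Finset.mem_range.1 hb') h)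
          have := Finset.card_le_card hsub
          rw [hinj, Finset.card_range] at this
          exact this
        have hNat : (∑ b ∈ range ((j0 + 1) - 1), G.dist (τ b) (τ (b+1)))
            = i + (m - i) + Sn' := by
          rw [show (j0 + 1) - 1 = (j0 - 1) + 1 by omega, Finset.sum_range_succ']
          rw [show j0 - 1 = (j0 - 2) + 1 by omega, Finset.sum_range_succ']
          have h1 : ∀ b ∈ range (j0 - 2),
              G.dist (τ (b+1+1)) (τ (b+1+1+1)) = G.dist (σ (b+1)) (σ (b+2)) := by
            intro b _
            rw [hτs _ (by omega), hτs _ (by omega),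
              show b+1+1-1 = b+1 by omega, show b+1+1+1-1 = b+2 by omega]
          have h0 : G.dist (τ 0) (τ 1) = i := by rw [hτ0, hτ1]; exact hdzi
          have h01 : G.dist (τ (0+1)) (τ (0+1+1)) = m - i := by
            rw [hτ1, hτs _ (by omega), show (0:ℕ)+1+1-1 = 1 by omega, ← hz'def]
            exact hdiz'
          rw [Finset.sum_congr rfl h1, h0, h01, hSn'def]
          omega
        have hτsum : (∑ b ∈ range ((j0 + 1) - 1), (G.dist (τ b) (τ (b+1)) : ℕ∞))
            = ((i + (m - i) + Sn' : ℕ) : ℕ∞) := by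
          rw [← hNat, Nat.cast_sum]
        have hval : (r:ℕ∞) ≤ (((i + (m - i) + Sn')
            - 2*((j0 + 1) - 1) + max (G.dist y t - 2) 1 : ℕ):ℕ∞) := by
          refine le_trans hrle ?_
          refine le_trans (rhoPrime2_le G C hyC (j := j0 + 1)
            (Finset.mem_Icc.2 ⟨by omega, hccard⟩)) ?_
          have h1 : collDist G C (j0 + 1) z y ≤ ((i + (m - i) + Sn' : ℕ):ℕ∞) :=
            le_trans (collDist_le G C hPτ) (le_of_eq hτsum)
          calc collDist G C (j0 + 1) z y - ((2*((j0 + 1)-1):ℕ):ℕ∞) + rhoPrime G y t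
              ≤ ((i + (m - i) + Sn' : ℕ):ℕ∞)
                - ((2*((j0 + 1)-1):ℕ):ℕ∞) + ((max (G.dist y t - 2) 1:ℕ):ℕ∞) :=
                add_le_add (tsub_le_tsub_right h1 _) (le_of_eq hpy)
            _ = _ := by rw [← ENat.coe_sub, ← Nat.cast_add]
        have hvaln : r ≤ (i + (m - i) + Sn')
            - 2*((j0 + 1) - 1) + max (G.dist y t - 2) 1 := by exact_mod_cast hval
        omega
    · push_neg at hint
      have hrel := relay_le G C (rhoStar G C) t (m-2) (fun i => p.getVert (i+2))
        (fun i hi => by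
          have h2 := p.adj_getVert_succ (show i + 2 < p.length by omega)
          rwa [show i + 2 + 1 = i + 1 + 2 by omega] at h2)
        (fun i hi => hint (i+2) (by omega) (by omega))
        (Fintype.card V - (m-2))
      rw [show Fintype.card V - (m-2) + (m-2) = Fintype.card V by omega] at hrel
      have hend : p.getVert ((m-2) + 2) = z' := by
        rw [show (m-2) + 2 = p.length by omega, p.getVert_length]
      rw [hend, perceived_coll G C (rhoStar G C) hz'C] at hrel
      have hrho2 : rho G C (rhoStar G C) (p.getVert 2) t
          = perceived G C (rhoStar G C) (Fintype.card V) (p.getVert 2) t := rfl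
      rw [← hrho2] at hrel
      have h3 : rho G C (rhoStar G C) (p.getVert 2) t ≤ (r:ℕ∞) := by
        refine le_trans hrel ?_
        calc ((m-2:ℕ):ℕ∞) + rhoStar G C z' t
            ≤ ((m-2:ℕ):ℕ∞) + ((Sn' - 2*(j0-2) + max (G.dist y t - 2) 1 : ℕ):ℕ∞) :=
              add_le_add_right hub _
          _ = (((m-2) + (Sn' - 2*(j0-2) + max (G.dist y t - 2) 1) : ℕ):ℕ∞) := by
              push_cast
              ring
          _ = (r:ℕ∞) := by
              congr 1
              omega
      have hadj01 : G.Adj z (p.getVert 1) := by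
        have h2 := p.adj_getVert_succ (show 0 < p.length by omega)
        rwa [p.getVert_zero] at h2
      have hadj12 : G.Adj (p.getVert 1) (p.getVert 2) :=
        p.adj_getVert_succ (by omega)
      have hflow := F2 z hBz _ hadj01 _ hadj12
      have heq2 : rho G C (rhoStar G C) (p.getVert 2) t = (r:ℕ∞) :=
        le_antisymm h3 hflow.1
      have hBad2 := hflow.2 heq2
      rcases Nat.lt_or_ge m 3 with hm3 | hm3
      · have hgv2 : p.getVert 2 = z' := by
          rw [show (2:ℕ) = p.length by omega, p.getVert_length]
        rw [hgv2] at hBad2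
        have hW' : (j0-1) ∈ Wset := by
          refine ⟨by omega, by omega, z', y, (fun i => σ (i+1)), hBad2, hyC, hP', ?_⟩
          rw [hsum', show (2*((j0-1)-1)) = 2*(j0-2) by omega, hpy,
            ← ENat.coe_sub, ← Nat.cast_add]
          have : Sn' - 2*(j0-2) + max (G.dist y t - 2) 1 = r := by omega
          rw [this]
        have hcontra := Nat.sInf_le hW'
        rw [← hj0def] at hcontra
        omega
      · exact absurd hBad2.1 (hint 2 (by omega) (by omega))


end AuxiliaryLemmas

/-- If no two colluding agents are adjacent in `G`, then the
broadcast `β(x,t) = ρ*(x,t)` is admissible. -/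
theorem rhoStar_admissible [Fintype V] [DecidableEq V] (G : SimpleGraph V)
    (hG : G.Connected) (hn : 2 ≤ Fintype.card V) (C : Finset V)
    (hsep : ∀ x ∈ C, ∀ y ∈ C, ¬ G.Adj x y) :
    Admissible G C (rhoStar G C) := by
  intro s t hst
  exact reaches_isCorrPath (reaches_all G C hG hn hsep t s)


end Intercept
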